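/- The box-ball time evolutions commute: for all l, k ≥ 1 and any state b (with sufficiently many trailing empty boxes), T_l(T_k(b)) = T_k(T_l(b)). -/

import Mathlib

/-- The type `A^{(1)}_1` combinatorial R-matrix on pairs:
`Rm (a,b) (c,d) = ((c',d'),(a',b'))`. -/
def Rm (x y : ℤ × ℤ) : (ℤ × ℤ) × (ℤ × ℤ) :=
  ((y.1 - min x.2 y.1 + min x.1 y.2, y.2 + min x.2 y.1 - min x.1 y.2),
   (x.1 + min x.2 y.1 - min x.1 y.2, x.2 - min x.2 y.1 + min x.1 y.2))

/-- Membership in the crystal `B^{1,s}`. -/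
def inB (s : ℤ) (x : ℤ × ℤ) : Prop := 0 ≤ x.1 ∧ 0 ≤ x.2 ∧ x.1 + x.2 = s

/-- Pass the carrier `u` through the state, applying the combinatorial R-matrix
at each box; returns the new state together with the final carrier. -/
def pass (u : ℤ × ℤ) : List (ℤ × ℤ) → List (ℤ × ℤ) × (ℤ × ℤ)
  | [] => ([], u)
  | x :: xs =>
      let r := Rm u x
      let p := pass r.2 xs
      (r.1 :: p.1, p.2)

/-- The box-ball time evolution `T_l`, using the carrier `u_l = (l,0)`. -/
def Tl (l : ℤ) (b : List (ℤ × ℤ)) : List (ℤ × ℤ) := (pass (l, 0) b).1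

/-- A ball. -/
def ball : ℤ × ℤ := (0, 1)

/-- An empty box. -/
def emptyBox : ℤ × ℤ := (1, 0)

lemma minz (a m : ℤ) (ha : 0 ≤ a) (h : m = min a 0) : m = 0 := by omega

lemma minone (b m : ℤ) (hb : 0 ≤ b) (h : m = min b 1) :
    (m = 0 ∧ b = 0) ∨ (m = 1 ∧ 1 ≤ b) := by omega

lemma casesEF (e f : ℤ) (he : 0 ≤ e) (hf : 0 ≤ f) (hef : e + f = 1) :
    (e = 1 ∧ f = 0) ∨ (e = 0 ∧ f = 1) := by omega

lemma key1 (a b c d m1 m2 m3 m4 m5 m6 m7 m8 m9 m10 m11 m12 : ℤ)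
    (ha : 0 ≤ a) (hb : 0 ≤ b) (hc : 0 ≤ c) (hd : 0 ≤ d)
    (h1 : m1 = min b 1) (h2 : m2 = min a 0)
    (h3 : m3 = min d (1 - m1 + m2)) (h4 : m4 = min c (0 + m1 - m2))
    (h5 : m5 = min b c) (h6 : m6 = min a d)
    (h7 : m7 = min (d + m5 - m6) 1) (h8 : m8 = min (c - m5 + m6) 0)
    (h9 : m9 = min (b - m5 + m6) (1 - m7 + m8))
    (h10 : m10 = min (a + m5 - m6) (0 + m7 - m8))
    (h11 : m11 = min (b - m1 + m2) (c + m3 - m4))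
    (h12 : m12 = min (a + m1 - m2) (d - m3 + m4)) :
    (- m7 + m8 - m9 + m10 = - m1 + m2 - m3 + m4) ∧
    (m3 - m4 - m11 + m12 = - m5 + m6 + m7 - m8) ∧
    (m1 - m2 + m11 - m12 = m5 - m6 + m9 - m10) := by
  have l5a : 0 ≤ m5 := by rw [h5]; exact le_min hb hc
  have l5b : m5 ≤ c := by rw [h5]; exact min_le_right b c
  have l6a : 0 ≤ m6 := by rw [h6]; exact le_min ha hd
  have l6b : m6 ≤ d := by rw [h6]; exact min_le_right a d
  have hm2 : m2 = 0 := minz a m2 ha h2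
  have hm8 : m8 = 0 := minz (c - m5 + m6) m8 (by linarith) h8
  clear h2 h8
  rcases minone (d + m5 - m6) m7 (by linarith) h7 with ⟨hm7, hd7⟩ | ⟨hm7, hd7⟩ <;>
    clear h7 <;>
    rcases minone b m1 hb h1 with ⟨hm1, hb1⟩ | ⟨hm1, hb1⟩ <;>
    clear h1 <;>
    rw [hm1, hm2] at h3 h4 <;>
    norm_num at h3 h4 <;>
    [rcases minone d m3 hd h3 with ⟨hm3, hd3⟩ | ⟨hm3, hd3⟩ <;>
      have hm4 : m4 = 0 := minz c m4 hc h4 <;> clear h3 h4 <;> omega;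
     (have hm3 : m3 = 0 := minz d m3 hd h3) <;>
      rcases minone c m4 hc h4 with ⟨hm4, hc4⟩ | ⟨hm4, hc4⟩ <;> clear h3 h4 <;> omega;
     rcases minone d m3 hd h3 with ⟨hm3, hd3⟩ | ⟨hm3, hd3⟩ <;>
      have hm4 : m4 = 0 := minz c m4 hc h4 <;> clear h3 h4 <;> omega;
     (have hm3 : m3 = 0 := minz d m3 hd h3) <;>
      rcases minone c m4 hc h4 with ⟨hm4, hc4⟩ | ⟨hm4, hc4⟩ <;> clear h3 h4 <;> omega]

lemma key (a b c d e f m1 m2 m3 m4 m5 m6 m7 m8 m9 m10 m11 m12 : ℤ)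
    (ha : 0 ≤ a) (hb : 0 ≤ b) (hc : 0 ≤ c) (hd : 0 ≤ d)
    (he : 0 ≤ e) (hf : 0 ≤ f) (hef : e + f = 1)
    (h1 : m1 = min b e) (h2 : m2 = min a f)
    (h3 : m3 = min d (e - m1 + m2)) (h4 : m4 = min c (f + m1 - m2))
    (h5 : m5 = min b c) (h6 : m6 = min a d)
    (h7 : m7 = min (d + m5 - m6) e) (h8 : m8 = min (c - m5 + m6) f)
    (h9 : m9 = min (b - m5 + m6) (e - m7 + m8))
    (h10 : m10 = min (a + m5 - m6) (f + m7 - m8))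
    (h11 : m11 = min (b - m1 + m2) (c + m3 - m4))
    (h12 : m12 = min (a + m1 - m2) (d - m3 + m4)) :
    (- m7 + m8 - m9 + m10 = - m1 + m2 - m3 + m4) ∧
    (m3 - m4 - m11 + m12 = - m5 + m6 + m7 - m8) ∧
    (m1 - m2 + m11 - m12 = m5 - m6 + m9 - m10) := by
  rcases casesEF e f he hf hef with ⟨he1, hf1⟩ | ⟨he1, hf1⟩ <;> subst he1 <;> subst hf1
  · exact key1 a b c d m1 m2 m3 m4 m5 m6 m7 m8 m9 m10 m11 m12 ha hb hc hd
      h1 h2 (by rw [h3]) (by rw [h4]) h5 h6 h7 h8 h9 h10 h11 h12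
  · obtain ⟨E1, E2, E3⟩ := key1 b a d c m2 m1 m4 m3 m6 m5 m8 m7 m10 m9 m12 m11 hb ha hd hc
      h2 h1
      (by rw [h4]; ring_nf)
      (by rw [h3]; ring_nf)
      h6 h5
      (by rw [h8]; ring_nf)
      (by rw [h7]; ring_nf)
      (by rw [h10]; ring_nf)
      (by rw [h9]; ring_nf)
      (by rw [h12]; ring_nf)
      (by rw [h11]; ring_nf)
    exact ⟨by linarith, by linarith, by linarith⟩

lemma ybe (u v x : ℤ × ℤ) (hu1 : 0 ≤ u.1) (hu2 : 0 ≤ u.2) (hv1 : 0 ≤ v.1)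
    (hv2 : 0 ≤ v.2) (hx : inB 1 x) :
    (Rm (Rm u v).2 (Rm (Rm u v).1 x).1).1 = (Rm v (Rm u x).1).1 ∧
    Rm (Rm u x).2 (Rm v (Rm u x).1).2 =
      ((Rm (Rm u v).1 x).2, (Rm (Rm u v).2 (Rm (Rm u v).1 x).1).2) := by
  obtain ⟨a, b⟩ := u; obtain ⟨c, d⟩ := v; obtain ⟨e, f⟩ := x
  obtain ⟨hx1, hx2, hx3⟩ := hx
  simp only at hu1 hu2 hv1 hv2 hx1 hx2 hx3
  obtain ⟨E1, E2, E3⟩ := key a b c d e f _ _ _ _ _ _ _ _ _ _ _ _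
    hu1 hu2 hv1 hv2 hx1 hx2 hx3 rfl rfl rfl rfl rfl rfl rfl rfl rfl rfl rfl rfl
  simp only [Rm, Prod.mk.injEq]
  refine ⟨⟨by linarith, by linarith⟩, ⟨by linarith, by linarith⟩, by linarith, by linarith⟩

lemma step (u x : ℤ × ℤ) (hu1 : 0 ≤ u.1) (hu2 : 0 ≤ u.2) (hx : inB 1 x) :
    inB 1 (Rm u x).1 ∧ 0 ≤ (Rm u x).2.1 ∧ 0 ≤ (Rm u x).2.2 := by
  obtain ⟨a, b⟩ := u; obtain ⟨e, f⟩ := x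
  obtain ⟨hx1, hx2, hx3⟩ := hx
  simp only [Rm, inB] at *
  omega

lemma pass_ybe (xs : List (ℤ × ℤ)) (u v : ℤ × ℤ)
    (hu1 : 0 ≤ u.1) (hu2 : 0 ≤ u.2) (hv1 : 0 ≤ v.1) (hv2 : 0 ≤ v.2)
    (hxs : ∀ x ∈ xs, inB 1 x) :
    (pass (Rm u v).2 (pass (Rm u v).1 xs).1).1 = (pass v (pass u xs).1).1 ∧
    Rm (pass u xs).2 (pass v (pass u xs).1).2 =
      ((pass (Rm u v).1 xs).2, (pass (Rm u v).2 (pass (Rm u v).1 xs).1).2) := by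
  induction xs generalizing u v with
  | nil => simp [_root_.pass]
  | cons x t ih =>
      have hx : inB 1 x := hxs x List.mem_cons_self
      have ht : ∀ y ∈ t, inB 1 y := fun y hy => hxs y (List.mem_cons_of_mem _ hy)
      have s1 := step u x hu1 hu2 hx
      have s2 := step v (Rm u x).1 hv1 hv2 s1.1
      obtain ⟨h1, h2⟩ := ybe u v x hu1 hu2 hv1 hv2 hx
      obtain ⟨ih1, ih2⟩ := ih (Rm u x).2 (Rm v (Rm u x).1).2 s1.2.1 s1.2.2 s2.2.1 s2.2.2 ht
      simp only [_root_.pass]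
      constructor
      · simp only [List.cons.injEq]
        refine ⟨h1, ?_⟩
        rw [← ih1, h2]
      · rw [ih2, h2]

lemma Rm_carriers (l k : ℤ) (hl : 0 ≤ l) (hk : 0 ≤ k) :
    Rm ((l : ℤ), (0 : ℤ)) (k, 0) = ((k, 0), (l, 0)) := by
  simp only [Rm, Prod.mk.injEq]
  refine ⟨⟨?_, ?_⟩, ?_, ?_⟩ <;> omega

/-- The box-ball time evolutions commute: for any state with sufficiently many
trailing empty boxes, `T_l ∘ T_k = T_k ∘ T_l`. -/
theorem Tl_commute (l k : ℤ) (hl : 1 ≤ l) (hk : 1 ≤ k)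
    (b : List (ℤ × ℤ)) (hb : ∀ x ∈ b, inB 1 x) :
    ∃ N : ℕ, ∀ n : ℕ, N ≤ n →
      Tl l (Tl k (b ++ List.replicate n emptyBox)) =
        Tl k (Tl l (b ++ List.replicate n emptyBox)) := by
  refine ⟨0, fun n _ => ?_⟩
  have hxs : ∀ x ∈ b ++ List.replicate n emptyBox, inB 1 x := by
    intro x hx
    rcases List.mem_append.1 hx with h | h
    · exact hb x h
    · rw [List.eq_of_mem_replicate h]
      exact ⟨by norm_num [emptyBox], by norm_num [emptyBox], by norm_num [emptyBox]⟩
  have h := (pass_ybe (b ++ List.replicate n emptyBox) (k, 0) (l, 0)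
    (by simp; omega) (by norm_num)
    (by simp; omega) (by norm_num) hxs).1
  rw [Rm_carriers k l (by omega) (by omega)] at h
  simpa [Tl] using h.symm
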